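/- Suppose (E₁, τ₁) is a separable locally solid Riesz space and (E₂, τ₂) is a super Dedekind complete locally solid Riesz space having an order bounded τ₂-neighborhood of zero. Then L_TC(E₁, E₂) is a super Dedekind complete Riesz space. -/

import Mathlib

open Filter Topology Bornology Set

/-- A subset of a Riesz space is solid if `|x| ≤ |y|` and `y ∈ S` imply `x ∈ S`. -/
def SolidSet {E : Type*} [Lattice E] [AddCommGroup E] (S : Set E) : Prop :=
  ∀ ⦃x y : E⦄, |x| ≤ |y| → y ∈ S → x ∈ S

/-- A linear topology on a Riesz space is locally solid if the neighborhood filter at zero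
has a basis of solid sets. -/
def LocallySolid (E : Type*) [Lattice E] [AddCommGroup E] [TopologicalSpace E] : Prop :=
  (𝓝 (0 : E)).HasBasis (fun S : Set E => S ∈ 𝓝 (0 : E) ∧ SolidSet S) id

variable {E₁ E₂ : Type*}
  [AddCommGroup E₁] [Lattice E₁] [Module ℝ E₁]
  [TopologicalSpace E₁] [IsTopologicalAddGroup E₁] [ContinuousSMul ℝ E₁]
  [AddCommGroup E₂] [Lattice E₂] [Module ℝ E₂]
  [TopologicalSpace E₂] [IsTopologicalAddGroup E₂] [ContinuousSMul ℝ E₂]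

/-- The order on topologically continuous operators: `S ≤ T` iff `S x ≤ T x` for
all `x ≥ 0`. -/
def cOpLe (S T : E₁ →L[ℝ] E₂) : Prop := ∀ x : E₁, 0 ≤ x → S x ≤ T x

/-- `M` is the supremum of the family `𝒜` of topologically continuous operators. -/
def cIsSup (𝒜 : Set (E₁ →L[ℝ] E₂)) (M : E₁ →L[ℝ] E₂) : Prop :=
  (∀ T ∈ 𝒜, cOpLe T M) ∧ ∀ U : E₁ →L[ℝ] E₂, (∀ T ∈ 𝒜, cOpLe T U) → cOpLe M U

set_option linter.unusedSectionVars false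
set_option maxHeartbeats 1000000

section AuxHelpers

lemma LocallySolid.exists_solid {E : Type*} [Lattice E] [AddCommGroup E] [TopologicalSpace E]
    (h : LocallySolid E) {W : Set E} (hW : W ∈ 𝓝 (0 : E)) :
    ∃ W' ∈ 𝓝 (0 : E), SolidSet W' ∧ W' ⊆ W := by
  rcases h.mem_iff.mp hW with ⟨S, ⟨h1, h2⟩, h3⟩
  exact ⟨S, h1, h2, h3⟩

section helpers
variable {E : Type*} [AddCommGroup E] [Lattice E] [CovariantClass E E (· + ·) (· ≤ ·)]

lemma posPart_le_abs (a : E) : a⁺ ≤ |a| := sup_le (le_abs_self a) (abs_nonneg a)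

lemma negPart_le_abs (a : E) : a⁻ ≤ |a| := by
  rw [← posPart_neg a, ← abs_neg a]; exact posPart_le_abs _

variable [Module ℝ E] [PosSMulMono ℝ E]

lemma smul_posPart_eq {c : ℝ} (hc : 0 ≤ c) (x : E) : (c • x)⁺ = c • x⁺ := by
  rcases eq_or_lt_of_le hc with h | h
  · simp [← h]
  · have hlub : IsLUB {c • x, 0} (c • x⁺) := by
      constructor
      · rintro z (rfl | rfl)
        · exact smul_le_smul_of_nonneg_left (le_posPart x) hc
        · simpa using smul_le_smul_of_nonneg_left (posPart_nonneg x) hc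
      · intro w hw
        have h1 : c • x ≤ w := hw (by left; rfl)
        have h2 : (0:E) ≤ w := hw (by right; rfl)
        have hx : x ≤ c⁻¹ • w := by
          have := smul_le_smul_of_nonneg_left h1 (le_of_lt (inv_pos.mpr h))
          rwa [inv_smul_smul₀ (ne_of_gt h)] at this
        have h0 : (0:E) ≤ c⁻¹ • w := smul_nonneg (le_of_lt (inv_pos.mpr h)) h2
        have hle : x⁺ ≤ c⁻¹ • w := sup_le hx h0
        have := smul_le_smul_of_nonneg_left hle hc
        rwa [smul_inv_smul₀ (ne_of_gt h)] at this
    exact isLUB_pair.unique hlub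

lemma smul_negPart_eq {c : ℝ} (hc : 0 ≤ c) (x : E) : (c • x)⁻ = c • x⁻ := by
  rw [← posPart_neg, ← posPart_neg, ← smul_neg, smul_posPart_eq hc]

end helpers

section Aux
variable [CovariantClass E₁ E₁ (· + ·) (· ≤ ·)] [PosSMulMono ℝ E₁]
  [CovariantClass E₂ E₂ (· + ·) (· ≤ ·)] [PosSMulMono ℝ E₂]

/-- Extension of an additive positively-homogeneous map on the positive cone to a
continuous linear map. -/
lemma extCLM (hls₁ : LocallySolid E₁) (hls₂ : LocallySolid E₂)
    (p : E₁ → E₂)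
    (hpos : ∀ x : E₁, 0 ≤ x → 0 ≤ p x)
    (padd : ∀ x y : E₁, 0 ≤ x → 0 ≤ y → p (x + y) = p x + p y)
    (psmul : ∀ c : ℝ, 0 < c → ∀ x : E₁, 0 ≤ x → p (c • x) = c • p x)
    (hbnd : ∀ W ∈ 𝓝 (0 : E₂), ∃ U ∈ 𝓝 (0 : E₁), ∀ x ∈ U, 0 ≤ x → p x ∈ W) :
    ∃ P : E₁ →L[ℝ] E₂, ∀ x : E₁, 0 ≤ x → P x = p x := by
  have p0 : p 0 = 0 := by
    have := padd 0 0 le_rfl le_rfl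
    simp only [add_zero] at this
    exact (left_eq_add.mp this)
  set ℓ : E₁ → E₂ := fun x => p x⁺ - p x⁻ with hℓ
  have hagree : ∀ x : E₁, 0 ≤ x → ℓ x = p x := by
    intro x hx
    simp only [hℓ, posPart_eq_self.mpr hx, negPart_eq_zero.mpr hx, p0, sub_zero]
  have epn : ∀ a : E₁, a⁺ = a + a⁻ := fun a => eq_add_of_sub_eq (posPart_sub_negPart a)
  have hadd : ∀ x y : E₁, ℓ (x + y) = ℓ x + ℓ y := by
    intro x y
    have key : (x + y)⁺ + (x⁻ + y⁻) = (x + y)⁻ + (x⁺ + y⁺) := by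
      rw [epn (x + y), epn x, epn y]; abel
    have h1 : p ((x + y)⁺ + (x⁻ + y⁻)) = p ((x+y)⁺) + (p x⁻ + p y⁻) := by
      rw [padd _ _ (posPart_nonneg _) (add_nonneg (negPart_nonneg _) (negPart_nonneg _)),
        padd _ _ (negPart_nonneg _) (negPart_nonneg _)]
    have h2 : p ((x + y)⁻ + (x⁺ + y⁺)) = p ((x+y)⁻) + (p x⁺ + p y⁺) := by
      rw [padd _ _ (negPart_nonneg _) (add_nonneg (posPart_nonneg _) (posPart_nonneg _)),
        padd _ _ (posPart_nonneg _) (posPart_nonneg _)]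
    have h3 : p ((x+y)⁺) + (p x⁻ + p y⁻) = p ((x+y)⁻) + (p x⁺ + p y⁺) := by
      rw [← h1, ← h2, key]
    have h4 : p ((x+y)⁺) = p ((x+y)⁻) + (p x⁺ + p y⁺) - (p x⁻ + p y⁻) := by
      rw [← h3]; abel
    simp only [hℓ, h4]; abel
  have hsmul : ∀ (c : ℝ) (x : E₁), ℓ (c • x) = c • ℓ x := by
    intro c x
    rcases lt_trichotomy c 0 with hc | hc | hc
    · have hc' : (0:ℝ) < -c := by linarith
      have hcx : c • x = (-c) • (-x) := by rw [smul_neg, neg_smul, neg_neg]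
      have e1 : (c • x)⁺ = (-c) • x⁻ := by
        rw [hcx, smul_posPart_eq hc'.le, posPart_neg]
      have e2 : (c • x)⁻ = (-c) • x⁺ := by
        rw [hcx, smul_negPart_eq hc'.le, negPart_neg]
      have h1 := psmul (-c) hc' x⁻ (negPart_nonneg x)
      have h2 := psmul (-c) hc' x⁺ (posPart_nonneg x)
      show p ((c • x)⁺) - p ((c • x)⁻) = c • (p x⁺ - p x⁻)
      rw [e1, e2, h1, h2, smul_sub, neg_smul, neg_smul]
      abel
    · simp [hℓ, hc, p0]
    · simp only [hℓ, smul_posPart_eq hc.le, smul_negPart_eq hc.le,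
        psmul c hc _ (posPart_nonneg x), psmul c hc _ (negPart_nonneg x), smul_sub]
  set f : E₁ →ₗ[ℝ] E₂ :=
    { toFun := ℓ, map_add' := hadd, map_smul' := hsmul } with hf
  have hcont0 : ContinuousAt f 0 := by
    rw [ContinuousAt, map_zero f, Filter.tendsto_def]
    intro W hW
    rcases hls₂.exists_solid hW with ⟨W', hW'n, hW's, hW'sub⟩
    rcases exists_nhds_zero_half hW'n with ⟨W₂, hW₂n, hW₂⟩
    rcases hbnd W₂ hW₂n with ⟨U', hU'n, hU'⟩
    rcases hls₁.exists_solid hU'n with ⟨U, hUn, hUs, hUsub⟩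
    refine Filter.mem_of_superset hUn ?_
    intro x hxU
    have habs1 : |x⁺| ≤ |x| := by
      rw [abs_of_nonneg (posPart_nonneg x)]; exact posPart_le_abs x
    have habs2 : |x⁻| ≤ |x| := by
      rw [abs_of_nonneg (negPart_nonneg x)]; exact negPart_le_abs x
    have hxp : x⁺ ∈ U := hUs habs1 hxU
    have hxn : x⁻ ∈ U := hUs habs2 hxU
    have h1 : p x⁺ ∈ W₂ := hU' _ (hUsub hxp) (posPart_nonneg x)
    have h2 : p x⁻ ∈ W₂ := hU' _ (hUsub hxn) (negPart_nonneg x)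
    have hsum : p x⁺ + p x⁻ ∈ W' := hW₂ _ h1 _ h2
    have habs : |f x| ≤ |p x⁺ + p x⁻| := by
      have hnn : 0 ≤ p x⁺ + p x⁻ :=
        add_nonneg (hpos _ (posPart_nonneg x)) (hpos _ (negPart_nonneg x))
      rw [abs_of_nonneg hnn]
      have : |f x| ≤ |p x⁺| + |p x⁻| := by
        have hfx : f x = p x⁺ + -(p x⁻) := by
          show p x⁺ - p x⁻ = _
          rw [sub_eq_add_neg]
        rw [hfx]
        exact (abs_add_le _ _).trans (le_of_eq (by rw [abs_neg]))
      refine this.trans (add_le_add ?_ ?_)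
      · rw [abs_of_nonneg (hpos _ (posPart_nonneg x))]
      · rw [abs_of_nonneg (hpos _ (negPart_nonneg x))]
    exact mem_preimage.mpr (hW'sub (hW's habs hsum))
  have hcont : Continuous f :=
    continuous_of_continuousAt_zero f.toAddMonoidHom hcont0
  exact ⟨⟨f, hcont⟩, fun x hx => hagree x hx⟩

/-- small scalar multiples of a point belong to any neighborhood of zero. -/
lemma exists_pos_smul_mem' {E : Type*} [AddCommGroup E] [Module ℝ E] [TopologicalSpace E]
    [ContinuousSMul ℝ E] {U : Set E} (hU : U ∈ 𝓝 (0 : E)) (x : E) :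
    ∃ lam : ℝ, 0 < lam ∧ lam • x ∈ U := by
  have hcont : Tendsto (fun t : ℝ => t • x) (𝓝 0) (𝓝 (0 : E)) := by
    have := (continuous_id.smul continuous_const : Continuous fun t : ℝ => t • x)
    have h0 : (0:ℝ) • x = 0 := zero_smul ℝ x
    have h1 : Tendsto (fun t : ℝ => t • x) (𝓝 0) (𝓝 ((0:ℝ) • x)) := this.tendsto 0
    rwa [h0] at h1
  have hev : ∀ᶠ t : ℝ in 𝓝[>] (0:ℝ), t • x ∈ U :=
    (hcont.mono_left nhdsWithin_le_nhds).eventually_mem hU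
  rcases (hev.and self_mem_nhdsWithin).exists with ⟨t, ht, htpos⟩
  exact ⟨t, htpos, ht⟩

/-- The order-unit package for `E₂`. -/
lemma unit_pack (hls₂ : LocallySolid E₂)
    (hV : ∃ V ∈ 𝓝 (0 : E₂), ∃ a b : E₂, V ⊆ Set.Icc a b) :
    ∃ (e : E₂) (V' : Set E₂), 0 ≤ e ∧ V' ∈ 𝓝 (0 : E₂) ∧ SolidSet V' ∧
      (∀ x ∈ V', |x| ≤ e) := by
  rcases hV with ⟨V, hVn, a, b, hVab⟩
  rcases hls₂.exists_solid hVn with ⟨V', hV'n, hV's, hV'sub⟩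
  refine ⟨b, V', ?_, hV'n, hV's, ?_⟩
  · have h0 : (0:E₂) ∈ V' := mem_of_mem_nhds hV'n
    have := (hVab (hV'sub h0)).2
    exact this
  · intro x hx
    have habs : |x| ∈ V' := hV's (le_of_eq (abs_abs x)) hx
    exact (hVab (hV'sub habs)).2

/-- Order-bounded sets with small bounds are topologically small. -/
lemma small_order_small (hls₂ : LocallySolid E₂) {e : E₂} (he : 0 ≤ e)
    {W : Set E₂} (hW : W ∈ 𝓝 (0 : E₂)) :
    ∃ lam : ℝ, 0 < lam ∧ ∀ z : E₂, |z| ≤ lam • e → z ∈ W := by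
  rcases hls₂.exists_solid hW with ⟨W', hW'n, hW's, hW'sub⟩
  rcases exists_pos_smul_mem' hW'n e with ⟨lam, hlam, hmem⟩
  refine ⟨lam, hlam, fun z hz => ?_⟩
  have : |z| ≤ |lam • e| := by
    rwa [abs_of_nonneg (smul_nonneg hlam.le he)]
  exact hW'sub (hW's this hmem)

/-- The positive part of a continuous operator. -/
lemma opPosPart (hls₁ : LocallySolid E₁) (hls₂ : LocallySolid E₂)
    (hded : ∀ A : Set E₂, A.Nonempty → BddAbove A → ∃ s, IsLUB A s)
    (hV : ∃ V ∈ 𝓝 (0 : E₂), ∃ a b : E₂, V ⊆ Set.Icc a b)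
    (T : E₁ →L[ℝ] E₂) :
    ∃ P : E₁ →L[ℝ] E₂, ∀ x : E₁, 0 ≤ x → IsLUB (T '' Icc 0 x) (P x) := by
  rcases unit_pack hls₂ hV with ⟨e, V', he, hV'n, hV's, hV'e⟩
  -- a solid neighborhood mapped into V' by T
  obtain ⟨U, hUn, hUs, hUsub⟩ :
      ∃ U ∈ 𝓝 (0:E₁), SolidSet U ∧ U ⊆ T ⁻¹' V' :=
    hls₁.exists_solid (T.continuous.continuousAt.preimage_mem_nhds (by
      simpa using hV'n))
  -- key boundedness: for 0 ≤ x with lam • x ∈ U, all of T '' Icc 0 x ≤ lam⁻¹ • e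
  have key : ∀ (lam : ℝ), 0 < lam → ∀ x : E₁, lam • x ∈ U →
      ∀ y ∈ Icc (0:E₁) x, T y ≤ lam⁻¹ • e := by
    intro lam hlam x hxU y hy
    have h1 : lam • y ∈ U := by
      refine hUs ?_ hxU
      have h2 : 0 ≤ lam • y := smul_nonneg hlam.le hy.1
      have h3 : lam • y ≤ lam • x := smul_le_smul_of_nonneg_left hy.2 hlam.le
      rw [abs_of_nonneg h2]
      exact h3.trans (le_abs_self _)
    have h4 : |T (lam • y)| ≤ e := hV'e _ (hUsub h1)
    have h5 : T (lam • y) ≤ e := (le_abs_self _).trans h4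
    have h6 : lam⁻¹ • T (lam • y) ≤ lam⁻¹ • e :=
      smul_le_smul_of_nonneg_left h5 (inv_pos.mpr hlam).le
    rwa [map_smul, inv_smul_smul₀ (ne_of_gt hlam)] at h6
  have hex : ∀ x : E₁, 0 ≤ x → ∃ s, IsLUB (T '' Icc 0 x) s := by
    intro x hx
    apply hded
    · exact ⟨T 0, mem_image_of_mem _ (left_mem_Icc.mpr hx)⟩
    · rcases exists_pos_smul_mem' hUn x with ⟨lam, hlam, hmem⟩
      refine ⟨lam⁻¹ • e, ?_⟩
      rintro _ ⟨y, hy, rfl⟩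
      exact key lam hlam x hmem y hy
  classical
  set p : E₁ → E₂ := fun x =>
    if h : ∃ s, IsLUB (T '' Icc 0 x) s then h.choose else 0 with hp
  have spec : ∀ x : E₁, 0 ≤ x → IsLUB (T '' Icc 0 x) (p x) := by
    intro x hx
    have h := hex x hx
    simp only [hp, dif_pos h]
    exact h.choose_spec
  have hpos : ∀ x : E₁, 0 ≤ x → 0 ≤ p x := by
    intro x hx
    have := (spec x hx).1 (mem_image_of_mem _ (left_mem_Icc.mpr hx))
    simpa using this
  have padd : ∀ x y : E₁, 0 ≤ x → 0 ≤ y → p (x + y) = p x + p y := by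
    intro x y hx hy
    refine (spec _ (add_nonneg hx hy)).unique ?_
    constructor
    · rintro _ ⟨z, hz, rfl⟩
      -- Riesz decomposition z = (z ⊓ x) + (z - z ⊓ x)
      have hz1 : z ⊓ x ∈ Icc (0:E₁) x := ⟨le_inf hz.1 hx, inf_le_right⟩
      have hz2 : z - z ⊓ x ∈ Icc (0:E₁) y := by
        constructor
        · simpa using inf_le_left (a := z) (b := x)
        · have hzz : z - z ⊓ x = (z - z) ⊔ (z - x) := by
            rw [sub_inf]
          rw [hzz, sub_self]
          have h2 : z - x ≤ y := sub_le_iff_le_add.mpr (by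
            have h3 := hz.2
            rwa [add_comm])
          exact sup_le hy h2
      have hdecomp : z = (z ⊓ x) + (z - z ⊓ x) := by abel
      calc T z = T (z ⊓ x) + T (z - z ⊓ x) := by rw [← map_add, ← hdecomp]
        _ ≤ p x + p y := add_le_add
            ((spec x hx).1 (mem_image_of_mem _ hz1))
            ((spec y hy).1 (mem_image_of_mem _ hz2))
    · intro c hc
      have h1 : p x ≤ c - p y := by
        refine (spec x hx).2 ?_
        rintro _ ⟨z1, hz1, rfl⟩
        have h2 : p y ≤ c - T z1 := by
          refine (spec y hy).2 ?_
          rintro _ ⟨z2, hz2, rfl⟩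
          have hmem : z1 + z2 ∈ Icc (0:E₁) (x + y) :=
            ⟨add_nonneg hz1.1 hz2.1, add_le_add hz1.2 hz2.2⟩
          have := hc (mem_image_of_mem T hmem)
          rw [map_add] at this
          exact le_sub_iff_add_le'.mpr this
        exact le_sub_iff_add_le'.mpr (le_sub_iff_add_le.mp h2)
      exact le_sub_iff_add_le.mp h1
  have psmul : ∀ c : ℝ, 0 < c → ∀ x : E₁, 0 ≤ x → p (c • x) = c • p x := by
    intro c hc x hx
    refine (spec _ (smul_nonneg hc.le hx)).unique ?_
    constructor
    · rintro _ ⟨z, hz, rfl⟩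
      have hw : c⁻¹ • z ∈ Icc (0:E₁) x := by
        constructor
        · exact smul_nonneg (inv_pos.mpr hc).le hz.1
        · have := smul_le_smul_of_nonneg_left hz.2 (inv_pos.mpr hc).le
          rwa [inv_smul_smul₀ (ne_of_gt hc)] at this
      have : T z = c • T (c⁻¹ • z) := by
        rw [← map_smul, smul_inv_smul₀ (ne_of_gt hc)]
      rw [this]
      exact smul_le_smul_of_nonneg_left ((spec x hx).1 (mem_image_of_mem _ hw)) hc.le
    · intro u hu
      have h1 : p x ≤ c⁻¹ • u := by
        refine (spec x hx).2 ?_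
        rintro _ ⟨w, hw, rfl⟩
        have hmem : c • w ∈ Icc (0:E₁) (c • x) :=
          ⟨smul_nonneg hc.le hw.1, smul_le_smul_of_nonneg_left hw.2 hc.le⟩
        have h2 : T (c • w) ≤ u := hu (mem_image_of_mem T hmem)
        have h3 : c⁻¹ • T (c • w) ≤ c⁻¹ • u :=
          smul_le_smul_of_nonneg_left h2 (inv_pos.mpr hc).le
        rwa [map_smul, inv_smul_smul₀ (ne_of_gt hc)] at h3
      have := smul_le_smul_of_nonneg_left h1 hc.le
      rwa [smul_inv_smul₀ (ne_of_gt hc)] at this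
  have hbnd : ∀ W ∈ 𝓝 (0 : E₂), ∃ U'' ∈ 𝓝 (0:E₁), ∀ x ∈ U'', 0 ≤ x → p x ∈ W := by
    intro W hW
    rcases hls₂.exists_solid hW with ⟨W', hW'n, hW's, hW'sub⟩
    rcases small_order_small hls₂ he hW'n with ⟨mu, hmu, hmuW⟩
    refine ⟨(fun v : E₁ => mu⁻¹ • v) ⁻¹' U, ?_, ?_⟩
    · apply (continuous_const.smul continuous_id).continuousAt.preimage_mem_nhds
      simpa using hUn
    · intro x hxmem hx
      have hin : mu⁻¹ • x ∈ U := hxmem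
      have hble : p x ≤ (mu⁻¹)⁻¹ • e := by
        refine (spec x hx).2 ?_
        rintro _ ⟨y, hy, rfl⟩
        exact key mu⁻¹ (inv_pos.mpr hmu) x hin y hy
      rw [inv_inv] at hble
      have : |p x| ≤ mu • e := by rwa [abs_of_nonneg (hpos x hx)]
      exact hW'sub (hmuW _ this)
  rcases extCLM hls₁ hls₂ p hpos padd psmul hbnd with ⟨P, hP⟩
  exact ⟨P, fun x hx => by rw [hP x hx]; exact spec x hx⟩


/-- The pointwise supremum of an upward-directed, bounded family of operators. -/
lemma opDirSup (hls₁ : LocallySolid E₁) (hls₂ : LocallySolid E₂)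
    (hded : ∀ A : Set E₂, A.Nonempty → BddAbove A → ∃ s, IsLUB A s)
    (𝒮 : Set (E₁ →L[ℝ] E₂)) (T₀ : E₁ →L[ℝ] E₂) (hT₀ : T₀ ∈ 𝒮)
    (hdir : ∀ A ∈ 𝒮, ∀ B ∈ 𝒮, ∃ C ∈ 𝒮, cOpLe A C ∧ cOpLe B C)
    (M : E₁ →L[ℝ] E₂) (hM : ∀ T ∈ 𝒮, cOpLe T M) :
    ∃ G : E₁ →L[ℝ] E₂, ∀ x : E₁, 0 ≤ x →
      IsLUB ((fun T : E₁ →L[ℝ] E₂ => T x) '' 𝒮) (G x) := by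
  classical
  set ev : E₁ → Set E₂ := fun x => (fun T : E₁ →L[ℝ] E₂ => T x) '' 𝒮 with hev
  have hex : ∀ x : E₁, 0 ≤ x → ∃ s, IsLUB (ev x) s := by
    intro x hx
    apply hded
    · exact ⟨T₀ x, mem_image_of_mem _ hT₀⟩
    · exact ⟨M x, by rintro _ ⟨T, hT, rfl⟩; exact hM T hT x hx⟩
  set q : E₁ → E₂ := fun x => if h : ∃ s, IsLUB (ev x) s then h.choose else 0 with hq
  have spec : ∀ x : E₁, 0 ≤ x → IsLUB (ev x) (q x) := by
    intro x hx
    have h := hex x hx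
    simp only [hq, dif_pos h]
    exact h.choose_spec
  set p : E₁ → E₂ := fun x => q x - T₀ x with hp
  have hqT₀ : ∀ x : E₁, 0 ≤ x → T₀ x ≤ q x := fun x hx =>
    (spec x hx).1 (mem_image_of_mem _ hT₀)
  have hqM : ∀ x : E₁, 0 ≤ x → q x ≤ M x := fun x hx =>
    (spec x hx).2 (by rintro _ ⟨T, hT, rfl⟩; exact hM T hT x hx)
  have hpos : ∀ x : E₁, 0 ≤ x → 0 ≤ p x := fun x hx =>
    sub_nonneg.mpr (hqT₀ x hx)
  have qadd : ∀ x y : E₁, 0 ≤ x → 0 ≤ y → q (x + y) = q x + q y := by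
    intro x y hx hy
    refine (spec _ (add_nonneg hx hy)).unique ?_
    constructor
    · rintro _ ⟨T, hT, rfl⟩
      show T (x + y) ≤ q x + q y
      rw [map_add]
      exact add_le_add ((spec x hx).1 (mem_image_of_mem _ hT))
        ((spec y hy).1 (mem_image_of_mem _ hT))
    · intro c hc
      have h1 : q x ≤ c - q y := by
        refine (spec x hx).2 ?_
        rintro _ ⟨A, hA, rfl⟩
        have h2 : q y ≤ c - A x := by
          refine (spec y hy).2 ?_
          rintro _ ⟨B, hB, rfl⟩
          rcases hdir A hA B hB with ⟨C, hC, hAC, hBC⟩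
          have h3 : A x + B y ≤ C x + C y := add_le_add (hAC x hx) (hBC y hy)
          have h4 : C x + C y = C (x + y) := (map_add C x y).symm
          have h5 : C (x + y) ≤ c := hc (mem_image_of_mem _ hC)
          have h6 : A x + B y ≤ c := h3.trans (h4 ▸ h5)
          exact le_sub_iff_add_le'.mpr h6
        exact le_sub_iff_add_le'.mpr (le_sub_iff_add_le.mp h2)
      exact le_sub_iff_add_le.mp h1
  have qsmul : ∀ c : ℝ, 0 < c → ∀ x : E₁, 0 ≤ x → q (c • x) = c • q x := by
    intro c hc x hx
    refine (spec _ (smul_nonneg hc.le hx)).unique ?_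
    constructor
    · rintro _ ⟨T, hT, rfl⟩
      show T (c • x) ≤ c • q x
      rw [map_smul]
      exact smul_le_smul_of_nonneg_left ((spec x hx).1 (mem_image_of_mem _ hT)) hc.le
    · intro u hu
      have h1 : q x ≤ c⁻¹ • u := by
        refine (spec x hx).2 ?_
        rintro _ ⟨T, hT, rfl⟩
        have h2 : T (c • x) ≤ u := hu (mem_image_of_mem _ hT)
        rw [map_smul] at h2
        have h3 := smul_le_smul_of_nonneg_left h2 (inv_pos.mpr hc).le
        rwa [inv_smul_smul₀ (ne_of_gt hc)] at h3
      have := smul_le_smul_of_nonneg_left h1 hc.le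
      rwa [smul_inv_smul₀ (ne_of_gt hc)] at this
  have padd : ∀ x y : E₁, 0 ≤ x → 0 ≤ y → p (x + y) = p x + p y := by
    intro x y hx hy
    simp only [hp, qadd x y hx hy, map_add]
    abel
  have psmul : ∀ c : ℝ, 0 < c → ∀ x : E₁, 0 ≤ x → p (c • x) = c • p x := by
    intro c hc x hx
    simp only [hp, qsmul c hc x hx, map_smul, smul_sub]
  have hbnd : ∀ W ∈ 𝓝 (0 : E₂), ∃ U ∈ 𝓝 (0:E₁), ∀ x ∈ U, 0 ≤ x → p x ∈ W := by
    intro W hW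
    rcases hls₂.exists_solid hW with ⟨W', hW'n, hW's, hW'sub⟩
    refine ⟨(M - T₀) ⁻¹' W', ?_, ?_⟩
    · apply (M - T₀).continuous.continuousAt.preimage_mem_nhds
      simpa using hW'n
    · intro x hxmem hx
      have h1 : (M - T₀) x ∈ W' := hxmem
      have h2 : |p x| ≤ |(M - T₀) x| := by
        rw [abs_of_nonneg (hpos x hx)]
        have h3 : p x ≤ (M - T₀) x := by
          simp only [hp, ContinuousLinearMap.sub_apply]
          exact sub_le_sub_right (hqM x hx) _
        exact h3.trans (le_abs_self _)
      exact hW'sub (hW's h2 h1)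
  rcases extCLM hls₁ hls₂ p hpos padd psmul hbnd with ⟨P, hP⟩
  refine ⟨P + T₀, fun x hx => ?_⟩
  have : (P + T₀) x = q x := by
    simp only [ContinuousLinearMap.add_apply, hP x hx, hp]
    abel
  rw [this]
  exact spec x hx


lemma opBinSup (hls₁ : LocallySolid E₁) (hls₂ : LocallySolid E₂)
    (hded : ∀ A : Set E₂, A.Nonempty → BddAbove A → ∃ s, IsLUB A s)
    (hV : ∃ V ∈ 𝓝 (0 : E₂), ∃ a b : E₂, V ⊆ Set.Icc a b)
    (S T : E₁ →L[ℝ] E₂) : ∃ J : E₁ →L[ℝ] E₂, cIsSup {S, T} J := by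
  rcases opPosPart hls₁ hls₂ hded hV (T - S) with ⟨P, hP⟩
  refine ⟨S + P, ?_, ?_⟩
  · rintro A (rfl | rfl)
    · intro x hx
      have h0 : (0:E₂) ≤ P x := by
        have h1 := (hP x hx).1 (mem_image_of_mem _ (left_mem_Icc.mpr hx))
        simpa using h1
      show A x ≤ A x + P x
      exact le_add_of_nonneg_right h0
    · intro x hx
      have h1 : (A - S) x ≤ P x :=
        (hP x hx).1 (mem_image_of_mem _ (right_mem_Icc.mpr hx))
      have h2 : A x - S x ≤ P x := by
        simpa using h1
      show A x ≤ S x + P x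
      exact sub_le_iff_le_add'.mp h2
  · intro U hU x hx
    have hS := hU S (mem_insert _ _)
    have hT := hU T (mem_insert_of_mem _ rfl)
    have h2 : P x ≤ U x - S x := by
      refine (hP x hx).2 ?_
      rintro _ ⟨y, hy, rfl⟩
      have h3 : T y ≤ U y := hT y hy.1
      have h4 : S (x - y) ≤ U (x - y) := hS (x - y) (sub_nonneg.mpr hy.2)
      rw [map_sub, map_sub] at h4
      have h5 : U y - S y ≤ U x - S x := by
        rw [sub_le_sub_iff]
        have h6 : S x + U y ≤ U x + S y := sub_le_sub_iff.mp h4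
        calc U y + S x = S x + U y := by abel
          _ ≤ U x + S y := h6
      have h7 : (T - S) y = T y - S y := rfl
      show (T - S) y ≤ U x - S x
      rw [h7]
      exact (sub_le_sub_right h3 (S y)).trans h5
    show S x + P x ≤ U x
    calc S x + P x ≤ S x + (U x - S x) := add_le_add le_rfl h2
      _ = U x := by abel


end Aux
end AuxHelpers

/-- If `E₁` is a separable locally solid Riesz space and `E₂` is a super Dedekind complete
locally solid Riesz space with an order bounded neighborhood of zero, then the space of
topologically continuous operators is a super Dedekind complete Riesz space: binary
suprema exist, every nonempty order bounded family has a supremum, and every family with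
a supremum admits a countable subfamily with the same supremum. -/
theorem stmt7
    [CovariantClass E₁ E₁ (· + ·) (· ≤ ·)] [PosSMulMono ℝ E₁]
    [CovariantClass E₂ E₂ (· + ·) (· ≤ ·)] [PosSMulMono ℝ E₂]
    [TopologicalSpace.SeparableSpace E₁]
    (hls₁ : LocallySolid E₁) (hls₂ : LocallySolid E₂)
    (hded : ∀ A : Set E₂, A.Nonempty → BddAbove A → ∃ s, IsLUB A s)
    (hcsp : ∀ (A : Set E₂) (s : E₂), IsLUB A s →
      ∃ C ⊆ A, C.Countable ∧ IsLUB C s)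
    (hV : ∃ V ∈ 𝓝 (0 : E₂), ∃ a b : E₂, V ⊆ Set.Icc a b) :
    (∀ S T : E₁ →L[ℝ] E₂, ∃ J : E₁ →L[ℝ] E₂, cIsSup {S, T} J) ∧
    (∀ 𝒜 : Set (E₁ →L[ℝ] E₂), 𝒜.Nonempty →
      (∃ U : E₁ →L[ℝ] E₂, ∀ T ∈ 𝒜, cOpLe T U) →
      ∃ M : E₁ →L[ℝ] E₂, cIsSup 𝒜 M) ∧
    (∀ (𝒜 : Set (E₁ →L[ℝ] E₂)) (M : E₁ →L[ℝ] E₂), cIsSup 𝒜 M →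
      ∃ C ⊆ 𝒜, C.Countable ∧ cIsSup C M) := by

  classical
  have part1 : ∀ S T : E₁ →L[ℝ] E₂, ∃ J : E₁ →L[ℝ] E₂, cIsSup {S, T} J :=
    opBinSup hls₁ hls₂ hded hV
  choose bsup hbsup using part1
  have htrans : ∀ {A B C : E₁ →L[ℝ] E₂}, cOpLe A B → cOpLe B C → cOpLe A C :=
    fun h1 h2 x hx => (h1 x hx).trans (h2 x hx)
  have hb1 : ∀ S T, cOpLe S (bsup S T) := fun S T => (hbsup S T).1 S (mem_insert _ _)
  have hb2 : ∀ S T, cOpLe T (bsup S T) := fun S T =>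
    (hbsup S T).1 T (mem_insert_of_mem _ rfl)
  have hb3 : ∀ S T U, cOpLe S U → cOpLe T U → cOpLe (bsup S T) U := by
    intro S T U h1 h2
    refine (hbsup S T).2 U ?_
    rintro A (rfl | rfl)
    exacts [h1, h2]
  -- fold facts
  have ffle : ∀ (l : List (E₁ →L[ℝ] E₂)) (T), cOpLe T (l.foldr bsup T) := by
    intro l
    induction l with
    | nil => intro T x hx; exact le_rfl
    | cons B l ih => intro T; exact htrans (ih T) (hb2 B (l.foldr bsup T))
  have fmem : ∀ (l : List (E₁ →L[ℝ] E₂)) (A), A ∈ l → ∀ T, cOpLe A (l.foldr bsup T) := by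
    intro l
    induction l with
    | nil => intro A hA; exact absurd hA (List.not_mem_nil)
    | cons B l ih =>
      intro A hA T
      rcases List.mem_cons.mp hA with rfl | hA'
      · exact hb1 _ _
      · exact htrans (ih A hA' T) (hb2 _ _)
  have fub : ∀ (l : List (E₁ →L[ℝ] E₂)) (T U), cOpLe T U → (∀ A ∈ l, cOpLe A U) →
      cOpLe (l.foldr bsup T) U := by
    intro l
    induction l with
    | nil => intro T U h _; exact h
    | cons B l ih =>
      intro T U hT hA
      exact hb3 _ _ _ (hA B (List.mem_cons_self))
        (ih T U hT (fun A hA' => hA A (List.mem_cons_of_mem _ hA')))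
  -- the sup-closure of a family
  set cl : Set (E₁ →L[ℝ] E₂) → Set (E₁ →L[ℝ] E₂) := fun 𝒜 =>
    {X | ∃ (T : E₁ →L[ℝ] E₂) (l : List (E₁ →L[ℝ] E₂)),
      T ∈ 𝒜 ∧ (∀ A ∈ l, A ∈ 𝒜) ∧ X = l.foldr bsup T} with hcl
  have hsub : ∀ 𝒜, 𝒜 ⊆ cl 𝒜 := by
    intro 𝒜 T hT
    exact ⟨T, [], hT, by simp, rfl⟩
  have hdircl : ∀ 𝒜, ∀ A ∈ cl 𝒜, ∀ B ∈ cl 𝒜, ∃ C ∈ cl 𝒜, cOpLe A C ∧ cOpLe B C := by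
    rintro 𝒜 A ⟨T, l, hT, hl, rfl⟩ B ⟨T', l', hT', hl', rfl⟩
    refine ⟨(l ++ T' :: l').foldr bsup T, ⟨T, l ++ T' :: l', hT, ?_, rfl⟩, ?_, ?_⟩
    · intro X hX
      rcases List.mem_append.mp hX with h | h
      · exact hl X h
      · rcases List.mem_cons.mp h with rfl | h'
        · exact hT'
        · exact hl' X h'
    · refine fub l T _ (ffle _ T) ?_
      intro X hX
      exact fmem _ X (List.mem_append.mpr (Or.inl hX)) T
    · refine fub l' T' _ ?_ ?_
      · exact fmem _ T' (List.mem_append.mpr (Or.inr (List.mem_cons_self))) T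
      · intro X hX
        exact fmem _ X (List.mem_append.mpr (Or.inr (List.mem_cons_of_mem _ hX))) T
  have hubcl : ∀ 𝒜 (U : E₁ →L[ℝ] E₂), (∀ T ∈ 𝒜, cOpLe T U) → ∀ X ∈ cl 𝒜, cOpLe X U := by
    rintro 𝒜 U hU X ⟨T, l, hT, hl, rfl⟩
    exact fub l T U (hU T hT) (fun A hA => hU A (hl A hA))
  have part2 : ∀ 𝒜 : Set (E₁ →L[ℝ] E₂), 𝒜.Nonempty →
      (∃ U : E₁ →L[ℝ] E₂, ∀ T ∈ 𝒜, cOpLe T U) → ∃ M : E₁ →L[ℝ] E₂, cIsSup 𝒜 M := by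
    rintro 𝒜 ⟨T₀, hT₀⟩ ⟨U, hU⟩
    obtain ⟨G, hG⟩ := opDirSup hls₁ hls₂ hded (cl 𝒜) T₀ (hsub 𝒜 hT₀) (hdircl 𝒜) U
      (hubcl 𝒜 U hU)
    refine ⟨G, ?_, ?_⟩
    · intro T hT x hx
      exact (hG x hx).1 (mem_image_of_mem _ (hsub 𝒜 hT))
    · intro U' hU' x hx
      refine (hG x hx).2 ?_
      rintro _ ⟨X, hX, rfl⟩
      exact hubcl 𝒜 U' hU' X hX x hx
  have part3 : ∀ (𝒜 : Set (E₁ →L[ℝ] E₂)) (M : E₁ →L[ℝ] E₂), cIsSup 𝒜 M →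
      ∃ C ⊆ 𝒜, C.Countable ∧ cIsSup C M := by
    intro 𝒜 M hM
    rcases 𝒜.eq_empty_or_nonempty with rfl | ⟨T₀, hT₀⟩
    · exact ⟨∅, Subset.rfl, countable_empty, hM⟩
    obtain ⟨e, V', he, hV'n, hV's, hV'e⟩ := unit_pack hls₂ hV
    have hMub : ∀ X ∈ cl 𝒜, cOpLe X M := hubcl 𝒜 M hM.1
    obtain ⟨G, hG⟩ := opDirSup hls₁ hls₂ hded (cl 𝒜) T₀ (hsub 𝒜 hT₀) (hdircl 𝒜) M hMub
    have hGM : ∀ x : E₁, 0 ≤ x →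
        IsLUB ((fun X : E₁ →L[ℝ] E₂ => X x) '' cl 𝒜) (M x) := by
      intro x hx
      have h1 : G x ≤ M x := (hG x hx).2 (by
        rintro _ ⟨X, hX, rfl⟩; exact hMub X hX x hx)
      have h2 : M x ≤ G x := hM.2 G (fun T hT x' hx' =>
        (hG x' hx').1 (mem_image_of_mem _ (hsub 𝒜 hT))) x hx
      have h3 : G x = M x := le_antisymm h1 h2
      rw [← h3]
      exact hG x hx
    obtain ⟨D, hDc, hDd⟩ := TopologicalSpace.exists_countable_dense E₁
    have hCc : ∀ d : E₁, ∃ C ⊆ (fun X : E₁ →L[ℝ] E₂ => X d⁺) '' cl 𝒜,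
        C.Countable ∧ IsLUB C (M d⁺) :=
      fun d => hcsp _ _ (hGM d⁺ (posPart_nonneg d))
    choose Cd hCdsub hCdcnt hCdlub using hCc
    have hwit : ∀ (d : E₁) (v : E₂), v ∈ Cd d → ∃ F : Set (E₁ →L[ℝ] E₂),
        F.Finite ∧ F ⊆ 𝒜 ∧ ∀ U : E₁ →L[ℝ] E₂, (∀ A ∈ F, cOpLe A U) → v ≤ U d⁺ := by
      intro d v hv
      obtain ⟨X, hX, rfl⟩ := hCdsub d hv
      obtain ⟨T, l, hT, hl, rfl⟩ := hX
      refine ⟨insert T {A | A ∈ l}, Set.Finite.insert T l.finite_toSet, ?_, ?_⟩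
      · rintro A (rfl | hA)
        · exact hT
        · exact hl A hA
      · intro U hU
        exact fub l T U (hU T (mem_insert _ _))
          (fun A hA => hU A (mem_insert_of_mem _ hA)) d⁺ (posPart_nonneg d)
    choose! F hFfin hFsub hFle using hwit
    refine ⟨⋃ d ∈ D, ⋃ v ∈ Cd d, F d v, ?_, ?_, ?_, ?_⟩
    · intro A hA
      simp only [mem_iUnion] at hA
      obtain ⟨d, hd, v, hv, hAm⟩ := hA
      exact hFsub d v hv hAm
    · exact hDc.biUnion (fun d hd => (hCdcnt d).biUnion
        (fun v hv => (hFfin d v hv).countable))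
    · intro T hT
      have hTA : T ∈ 𝒜 := by
        simp only [mem_iUnion] at hT
        obtain ⟨d, hd, v, hv, hTm⟩ := hT
        exact hFsub d v hv hTm
      exact hM.1 T hTA
    · intro U hU x hx
      have hMU : ∀ d ∈ D, M d⁺ ≤ U d⁺ := by
        intro d hd
        refine (hCdlub d).2 ?_
        intro v hv
        refine hFle d v hv U ?_
        intro A hA
        exact hU A (mem_biUnion hd (mem_biUnion hv hA))
      set R : E₁ →L[ℝ] E₂ := M - U with hRdef
      have hstepA : ∀ N ∈ 𝓝 (0 : E₂), (R x)⁺ ∈ N := by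
        intro N hN
        rcases hls₂.exists_solid hN with ⟨N₂, hN₂n, hN₂s, hN₂sub⟩
        obtain ⟨U₂, hU₂n, hU₂s, hU₂sub⟩ :
            ∃ U₂ ∈ 𝓝 (0:E₁), SolidSet U₂ ∧ U₂ ⊆ R ⁻¹' N₂ :=
          hls₁.exists_solid (R.continuous.continuousAt.preimage_mem_nhds
            (by simpa using hN₂n))
        have hXmem : {y : E₁ | y - x ∈ U₂} ∈ 𝓝 x := by
          have hc : Continuous fun y : E₁ => y - x := continuous_id.sub continuous_const
          exact hc.continuousAt.preimage_mem_nhds (by simpa using hU₂n)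
        obtain ⟨d, hdX, hdD⟩ := mem_closure_iff_nhds.mp (hDd x) _ hXmem
        have h1 : d⁺ - x⁺ ∈ U₂ := by
          refine hU₂s ?_ hdX
          rw [posPart_def, posPart_def]
          exact abs_sup_sub_sup_le_abs d x 0
        have h2 : R (d⁺ - x⁺) ∈ N₂ := hU₂sub h1
        have h3 : (R d⁺)⁺ = 0 := by
          refine posPart_eq_zero.mpr ?_
          have hrx : R d⁺ = M d⁺ - U d⁺ := rfl
          rw [hrx]
          exact sub_nonpos.mpr (hMU d hdD)
        have h4 : |(R x)⁺| ≤ |R (d⁺ - x⁺)| := by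
          have h5 : |(R d⁺)⁺ - (R x)⁺| ≤ |R d⁺ - R x| := by
            rw [posPart_def, posPart_def]
            exact abs_sup_sub_sup_le_abs _ _ 0
          rw [h3, zero_sub, abs_neg] at h5
          have h6 : R d⁺ - R x = R (d⁺ - x⁺) := by
            rw [map_sub]
            congr 1
            rw [posPart_eq_self.mpr hx]
          rwa [h6] at h5
        exact hN₂sub (hN₂s h4 h2)
      have hstepB : ∀ mu : ℝ, 0 < mu → (R x)⁺ ≤ mu • e := by
        intro mu hmu
        have hNmu : (fun z : E₂ => mu⁻¹ • z) ⁻¹' V' ∈ 𝓝 (0:E₂) := by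
          apply (continuous_const.smul continuous_id).continuousAt.preimage_mem_nhds
          simpa using hV'n
        have h1 := hstepA _ hNmu
        have h2 : |mu⁻¹ • (R x)⁺| ≤ e := hV'e _ h1
        rw [abs_of_nonneg (smul_nonneg (inv_pos.mpr hmu).le (posPart_nonneg _))] at h2
        have h3 := smul_le_smul_of_nonneg_left h2 hmu.le
        rwa [smul_inv_smul₀ (ne_of_gt hmu)] at h3
      have harch : (R x)⁺ = 0 := by
        have hbdd : ∀ n : ℕ, (n:ℝ) • (R x)⁺ ≤ e := by
          intro n
          rcases Nat.eq_zero_or_pos n with rfl | hn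
          · simpa using he
          · have hnpos : (0:ℝ) < n := by exact_mod_cast hn
            have h1 := hstepB (n:ℝ)⁻¹ (inv_pos.mpr hnpos)
            have h2 := smul_le_smul_of_nonneg_left h1 hnpos.le
            rwa [smul_inv_smul₀ (ne_of_gt hnpos)] at h2
        obtain ⟨s, hs⟩ := hded (Set.range fun n : ℕ => (n:ℝ) • (R x)⁺)
          ⟨((0:ℕ):ℝ) • (R x)⁺, mem_range_self 0⟩ ⟨e, by rintro _ ⟨n, rfl⟩; exact hbdd n⟩
        have hstep : ∀ n : ℕ, (n:ℝ) • (R x)⁺ ≤ s - (R x)⁺ := by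
          intro n
          have h1 : ((n+1 : ℕ):ℝ) • (R x)⁺ ≤ s := hs.1 (mem_range_self (n+1))
          have h2 : ((n+1 : ℕ):ℝ) • (R x)⁺ = (n:ℝ) • (R x)⁺ + (R x)⁺ := by
            push_cast
            rw [add_smul, one_smul]
          rw [h2] at h1
          exact le_sub_iff_add_le.mpr h1
        have h3 : s ≤ s - (R x)⁺ := hs.2 (by rintro _ ⟨n, rfl⟩; exact hstep n)
        have h4 : (R x)⁺ ≤ 0 := by
          have h5 := sub_nonneg.mpr h3
          have h6 : s - (R x)⁺ - s = -((R x)⁺) := by abel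
          rw [h6] at h5
          exact neg_nonneg.mp h5
        exact le_antisymm h4 (posPart_nonneg _)
      have h6 : R x ≤ 0 := posPart_eq_zero.mp harch
      have h7 : R x = M x - U x := rfl
      rw [h7] at h6
      exact sub_nonpos.mp h6
  exact ⟨fun S T => ⟨bsup S T, hbsup S T⟩, part2, part3⟩
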